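/- Let μ be a probability measure and g a nonnegative measurable function with ∫ g dμ = 1. Then (∫ |g - 1| dμ)² ≤ 2 ∫ g log g dμ. -/

import Mathlib

open Real MeasureTheory


lemma aux_log_ge {t : ℝ} (ht : 0 < t) : 1 - 1/t ≤ Real.log t := by
  have h := Real.log_le_sub_one_of_pos (by positivity : (0:ℝ) < 1/t)
  rw [Real.log_div one_ne_zero (ne_of_gt ht), Real.log_one] at h
  linarith

noncomputable def chi (t : ℝ) : ℝ := (t+1) * Real.log t - 2*(t-1)
noncomputable def psi (t : ℝ) : ℝ := (2*t+4)*(t*Real.log t - t + 1) - 3*(t-1)^2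

lemma chi_deriv {t : ℝ} (ht : 0 < t) :
    HasDerivAt chi (Real.log t + 1/t - 1) t := by
  have h1 : HasDerivAt (fun t : ℝ => (t+1) * Real.log t)
      (1 * Real.log t + (t+1) * t⁻¹) t :=
    ((hasDerivAt_id t).add_const 1).mul (Real.hasDerivAt_log (ne_of_gt ht))
  have h2 : HasDerivAt (fun t : ℝ => 2*(t-1)) 2 t := by
    simpa using (((hasDerivAt_id t).sub_const 1).const_mul 2)
  have := h1.sub h2
  refine (this : HasDerivAt chi _ t).congr_deriv ?_
  field_simp
  ring

lemma chi_mono : MonotoneOn chi (Set.Ioi 0) := by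
  apply monotoneOn_of_deriv_nonneg (convex_Ioi 0)
  · exact fun t ht => (chi_deriv ht).continuousAt.continuousWithinAt
  · rw [interior_Ioi]; exact fun t ht => (chi_deriv ht).differentiableAt.differentiableWithinAt
  · rw [interior_Ioi]
    intro t ht
    rw [(chi_deriv ht).deriv]
    have := aux_log_ge ht
    linarith

lemma psi_deriv {t : ℝ} (ht : 0 < t) :
    HasDerivAt psi (4 * chi t) t := by
  have hmul : HasDerivAt (fun t : ℝ => t * Real.log t - t + 1) (Real.log t) t := by
    have := (Real.hasDerivAt_mul_log (ne_of_gt ht)).sub (hasDerivAt_id t)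
    simpa using this.add_const 1
  have h1 : HasDerivAt (fun t : ℝ => (2*t+4)*(t*Real.log t - t + 1))
      (2 * (t*Real.log t - t + 1) + (2*t+4) * Real.log t) t := by
    have hlin : HasDerivAt (fun t : ℝ => 2*t+4) 2 t := by
      simpa using ((hasDerivAt_id t).const_mul 2).add_const 4
    exact hlin.mul hmul
  have h2 : HasDerivAt (fun t : ℝ => 3*(t-1)^2) (3*(2*(t-1))) t := by
    have : HasDerivAt (fun t : ℝ => (t-1)^2) (2*(t-1)^1*1) t :=
      (((hasDerivAt_id t).sub_const 1)).pow 2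
    simpa using this.const_mul 3
  have := h1.sub h2
  refine (this : HasDerivAt psi _ t).congr_deriv ?_
  unfold chi
  ring

lemma psi_nonneg {t : ℝ} (ht : 0 ≤ t) : 0 ≤ psi t := by
  have hpsi1 : psi 1 = 0 := by simp [psi]
  rcases le_or_gt t 1 with h1 | h1
  · -- antitone on [0,1]
    have hanti : AntitoneOn psi (Set.Icc 0 1) := by
      apply antitoneOn_of_deriv_nonpos (convex_Icc 0 1)
      · apply Continuous.continuousOn
        unfold psi
        exact (((continuous_const.mul continuous_id).add continuous_const).mul
          ((Real.continuous_mul_log.sub continuous_id).add continuous_const)).sub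
          (continuous_const.mul ((continuous_id.sub continuous_const).pow 2))
      · rw [interior_Icc]
        intro x hx
        exact (psi_deriv hx.1).differentiableAt.differentiableWithinAt
      · rw [interior_Icc]
        intro x hx
        rw [(psi_deriv hx.1).deriv]
        have : chi x ≤ chi 1 := chi_mono hx.1 (by norm_num) hx.2.le
        simp [chi] at this
        unfold chi; nlinarith [this]
    have := hanti ⟨ht, h1⟩ (by norm_num : (1:ℝ) ∈ Set.Icc (0:ℝ) 1) h1
    linarith
  · have hmono : MonotoneOn psi (Set.Ici 1) := by
      apply monotoneOn_of_deriv_nonneg (convex_Ici 1)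
      · exact fun x hx => (psi_deriv (by simp at hx; linarith)).continuousAt.continuousWithinAt
      · rw [interior_Ici]
        intro x hx
        exact (psi_deriv (by simp at hx; linarith)).differentiableAt.differentiableWithinAt
      · rw [interior_Ici]
        intro x hx
        simp only [Set.mem_Ioi] at hx
        rw [(psi_deriv (by linarith)).deriv]
        have : chi 1 ≤ chi x := chi_mono (by norm_num) (by simp; linarith) hx.le
        simp [chi] at this
        unfold chi; nlinarith [this]
    have := hmono (by norm_num : (1:ℝ) ∈ Set.Ici (1:ℝ)) (by simp; linarith) h1.le
    linarith

lemma psi_nonneg' {t : ℝ} (ht : 0 ≤ t) :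
    0 ≤ (2*t+4)*(t*Real.log t - t + 1) - 3*(t-1)^2 := psi_nonneg ht

lemma sqrt_mul_sqrt_le_add_div_two {a b : ℝ} (ha : 0 ≤ a) (hb : 0 ≤ b) :
    Real.sqrt a * Real.sqrt b ≤ (a + b) / 2 := by
  have e : 0 ≤ Real.sqrt a^2 - 2*(Real.sqrt a*Real.sqrt b) + Real.sqrt b^2 := by
    nlinarith [sq_nonneg (Real.sqrt a - Real.sqrt b)]
  rw [Real.sq_sqrt ha, Real.sq_sqrt hb] at e
  linarith


theorem csiszar_kullback {α : Type*} [MeasurableSpace α] (μ : Measure α)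
    [IsProbabilityMeasure μ] (g : α → ℝ) (hg_meas : Measurable g)
    (hg_nonneg : ∀ x, 0 ≤ g x) (hg_int : Integrable g μ)
    (hglog_int : Integrable (fun x => g x * Real.log (g x)) μ)
    (hg_mass : ∫ x, g x ∂μ = 1) :
    (∫ x, |g x - 1| ∂μ) ^ 2 ≤ 2 * ∫ x, g x * Real.log (g x) ∂μ := by
  set K := ∫ x, g x * Real.log (g x) ∂μ with hK
  set h : α → ℝ := fun x => g x * Real.log (g x) - g x + 1 with hh
  set f : α → ℝ := fun x => (2 * g x + 4) / 3 with hf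
  have hh_nonneg : ∀ x, 0 ≤ h x := by
    intro x
    have := psi_nonneg' (hg_nonneg x)
    simp only [hh]
    nlinarith [sq_nonneg (g x - 1), hg_nonneg x]
  have hf_nonneg : ∀ x, 0 ≤ f x := fun x => by
    have := hg_nonneg x; simp only [hf]; positivity
  have hh_int : Integrable h μ := (hglog_int.sub hg_int).add (integrable_const 1)
  have hh_meas : Measurable h :=
    ((hg_meas.mul (Real.measurable_log.comp hg_meas)).sub hg_meas).add_const 1
  have hf_int : Integrable f μ := ((hg_int.const_mul 2).add (integrable_const 4)).div_const 3
  have hf_meas : Measurable f := ((hg_meas.const_mul 2).add_const 4).div_const 3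
  -- pointwise : |g x - 1| ≤ sqrt (f x) * sqrt (h x)
  have hpt : ∀ x, |g x - 1| ≤ Real.sqrt (f x) * Real.sqrt (h x) := by
    intro x
    have hkey : (g x - 1)^2 ≤ f x * h x := by
      have := psi_nonneg' (hg_nonneg x)
      simp only [hf, hh]
      nlinarith
    calc |g x - 1| = Real.sqrt ((g x - 1)^2) := (Real.sqrt_sq_eq_abs _).symm
      _ ≤ Real.sqrt (f x * h x) := Real.sqrt_le_sqrt hkey
      _ = Real.sqrt (f x) * Real.sqrt (h x) := Real.sqrt_mul (hf_nonneg x) _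
  -- memℒp facts
  have hof2 : (ENNReal.ofReal 2) = (2 : ENNReal) := by norm_num
  have hmemf : MemLp (fun x => Real.sqrt (f x)) (ENNReal.ofReal 2) μ := by
    rw [hof2, memLp_two_iff_integrable_sq
      (hf_meas.sqrt.aestronglyMeasurable)]
    have : (fun x => Real.sqrt (f x) ^ 2) = f := by
      ext x; rw [Real.sq_sqrt (hf_nonneg x)]
    rwa [this]
  have hmemh : MemLp (fun x => Real.sqrt (h x)) (ENNReal.ofReal 2) μ := by
    rw [hof2, memLp_two_iff_integrable_sq (hh_meas.sqrt.aestronglyMeasurable)]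
    have : (fun x => Real.sqrt (h x) ^ 2) = h := by
      ext x; rw [Real.sq_sqrt (hh_nonneg x)]
    rwa [this]
  have hpq : Real.HolderConjugate 2 2 := Real.HolderConjugate.two_two
  have holder := integral_mul_le_Lp_mul_Lq_of_nonneg (μ := μ) hpq
    (Filter.Eventually.of_forall fun x => Real.sqrt_nonneg (f x))
    (Filter.Eventually.of_forall fun x => Real.sqrt_nonneg (h x)) hmemf hmemh
  -- compute RHS integrals
  have hsqf : ∀ x, Real.sqrt (f x) ^ (2:ℝ) = f x := by
    intro x
    rw [show ((2:ℝ)) = ((2:ℕ):ℝ) by norm_num, Real.rpow_natCast, Real.sq_sqrt (hf_nonneg x)]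
  have hsqh : ∀ x, Real.sqrt (h x) ^ (2:ℝ) = h x := by
    intro x
    rw [show ((2:ℝ)) = ((2:ℕ):ℝ) by norm_num, Real.rpow_natCast, Real.sq_sqrt (hh_nonneg x)]
  simp only [hsqf, hsqh] at holder
  have hcm : Integrable (fun x => 2 * g x) μ := hg_int.const_mul 2
  have hintf : ∫ x, f x ∂μ = 2 := by
    simp only [hf]
    rw [integral_div, integral_add hcm (integrable_const 4),
      integral_const_mul, hg_mass, integral_const]
    simp
    norm_num
  have hsub : Integrable (fun x => g x * Real.log (g x) - g x) μ := hglog_int.sub hg_int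
  have hinth : ∫ x, h x ∂μ = K := by
    simp only [hh]
    rw [integral_add hsub (integrable_const 1),
      integral_sub hglog_int hg_int, hg_mass, integral_const]
    simp [hK]
  rw [hintf, hinth] at holder
  have hKnn : 0 ≤ K := by
    rw [← hinth]; exact integral_nonneg hh_nonneg
  have h1 : ∫ x, |g x - 1| ∂μ ≤ (2:ℝ) ^ ((1:ℝ)/2) * K ^ ((1:ℝ)/2) := by
    refine le_trans ?_ holder
    have hprod_int : Integrable (fun x => Real.sqrt (f x) * Real.sqrt (h x)) μ := by
      apply Integrable.mono' ((hf_int.add hh_int).div_const 2)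
        ((hf_meas.sqrt.mul hh_meas.sqrt).aestronglyMeasurable)
      filter_upwards with x
      rw [Pi.mul_apply, Real.norm_of_nonneg (by positivity)]
      simp only [Pi.add_apply]
      exact sqrt_mul_sqrt_le_add_div_two (hf_nonneg x) (hh_nonneg x)
    exact integral_mono (hg_int.sub (integrable_const 1)).abs hprod_int hpt
  have hL_nonneg : 0 ≤ ∫ x, |g x - 1| ∂μ := integral_nonneg fun x => abs_nonneg _
  have hsq := pow_le_pow_left₀ hL_nonneg h1 2
  refine hsq.trans_eq ?_
  rw [← Real.sqrt_eq_rpow, ← Real.sqrt_eq_rpow, mul_pow,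
    Real.sq_sqrt (by norm_num : (0:ℝ) ≤ 2), Real.sq_sqrt hKnn]
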